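/- arXiv:2603.16950 — 2 statements merged into one kernel-verified Lean document; each statement's English description precedes it below -/
import Mathlib

section
/- (Local equivalence of VSKs with Paciorek–Schervish kernels.) Let d ≥ 1, ℓ > 0, and let ψ : ℝ^d → ℝ be continuously differentiable (C¹). Define the matrix fields M(x) = I + ∇ψ(x)∇ψ(x)ᵀ and Σ(x) = ℓ² M(x)^{-1} (M(x) is symmetric positive definite, hence invertible). Then for each fixed x ∈ ℝ^d, as h → 0, hᵀ (½(Σ(x) + Σ(x+h)))^{-1} h = (1/ℓ²) hᵀ M̄(x, x+h) h + o(‖h‖₂²), where M̄(x, x') = I + ½(∇ψ(x)∇ψ(x)ᵀ + ∇ψ(x')∇ψ(x')ᵀ). -/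
open scoped Topology

/-- Local equivalence of VSKs with Paciorek–Schervish kernels: for
`ψ : ℝ^d → ℝ` of class `C¹`, with `M(x) = I + ∇ψ(x)∇ψ(x)ᵀ` and `Σ(x) = ℓ² M(x)⁻¹`,
one has, as `h → 0`,
`hᵀ(½(Σ(x)+Σ(x+h)))⁻¹ h = (1/ℓ²) hᵀ M̄(x,x+h) h + o(‖h‖²)`, where
`M̄(x,x') = I + ½(∇ψ(x)∇ψ(x)ᵀ + ∇ψ(x')∇ψ(x')ᵀ)`. -/
theorem stmt_9 (d : ℕ) (hd : 1 ≤ d) (ℓ : ℝ) (hℓ : 0 < ℓ)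
    (ψ : EuclideanSpace ℝ (Fin d) → ℝ) (hψ : ContDiff ℝ 1 ψ)
    (M Sig : EuclideanSpace ℝ (Fin d) → Matrix (Fin d) (Fin d) ℝ)
    (Mbar : EuclideanSpace ℝ (Fin d) → EuclideanSpace ℝ (Fin d) →
      Matrix (Fin d) (Fin d) ℝ)
    (hM : ∀ z, M z = 1 + Matrix.vecMulVec (fun i => gradient ψ z i)
      (fun i => gradient ψ z i))
    (hSig : ∀ z, Sig z = ℓ ^ 2 • (M z)⁻¹)
    (hMbar : ∀ z z', Mbar z z' = 1 + (1 / 2 : ℝ) •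
      (Matrix.vecMulVec (fun i => gradient ψ z i) (fun i => gradient ψ z i)
        + Matrix.vecMulVec (fun i => gradient ψ z' i) (fun i => gradient ψ z' i)))
    (x : EuclideanSpace ℝ (Fin d)) :
    (fun h : EuclideanSpace ℝ (Fin d) =>
        dotProduct (fun i => h i)
          ((((1 / 2 : ℝ) • (Sig x + Sig (x + h)))⁻¹).mulVec fun i => h i)
          - (1 / ℓ ^ 2) * dotProduct (fun i => h i)
              ((Mbar x (x + h)).mulVec fun i => h i))
      =o[𝓝 0] fun h : EuclideanSpace ℝ (Fin d) => ‖h‖ ^ 2 := by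
  have hℓ2 : (ℓ : ℝ) ^ 2 ≠ 0 := by positivity
  set v : EuclideanSpace ℝ (Fin d) → (Fin d → ℝ) :=
    fun z i => gradient ψ z i with hvdef
  -- continuity of the gradient field
  have hgrad : Continuous (gradient ψ) := by
    show Continuous fun z => gradient ψ z
    simp only [gradient]
    exact (InnerProductSpace.toDual ℝ _).symm.continuous.comp (hψ.continuous_fderiv one_ne_zero)
  have hv : Continuous v :=
    continuous_pi fun i => (EuclideanSpace.proj i).continuous.comp hgrad
  have hVcont : Continuous fun z => Matrix.vecMulVec (v z) (v z) := by
    apply continuous_matrix; intro i j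
    simp only [Matrix.vecMulVec_apply]
    exact ((continuous_apply i).comp hv).mul ((continuous_apply j).comp hv)
  have hMcont : Continuous M := by
    have : M = fun z => 1 + Matrix.vecMulVec (v z) (v z) := funext hM
    rw [this]; exact continuous_const.add hVcont
  have hdetMpos : ∀ z, 0 < (M z).det := by
    intro z
    rw [hM, Matrix.vecMulVec_eq Unit, Matrix.det_one_add_replicateCol_mul_replicateRow]
    have : (0:ℝ) ≤ dotProduct (v z) (v z) := by
      simpa [dotProduct, ← sq] using
        Finset.sum_nonneg fun i (_ : i ∈ Finset.univ) => sq_nonneg (v z i)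
    linarith
  have hMu : ∀ z, IsUnit (M z).det := fun z => (hdetMpos z).ne'.isUnit
  have hRinv : ∀ a : ℝ, a ≠ 0 → ContinuousAt Ring.inverse a := fun a ha => by
    rw [Ring.inverse_eq_inv']; exact continuousAt_inv₀ ha
  have hSigC : ContinuousAt Sig x := by
    have : Sig = fun z => ℓ ^ 2 • (M z)⁻¹ := funext hSig
    rw [this]
    exact ContinuousAt.const_smul
      ((continuousAt_matrix_inv (M x) (hRinv _ (hdetMpos x).ne')).comp hMcont.continuousAt) (ℓ ^ 2 : ℝ)
  -- the symmetrized Σ field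
  have hSx : (1 / 2 : ℝ) • (Sig x + Sig x) = Sig x := by
    rw [← two_smul ℝ (Sig x), smul_smul]; norm_num
  have hdetSig : (Sig x).det ≠ 0 := by
    rw [hSig, Matrix.det_smul, Matrix.det_nonsing_inv, Ring.inverse_eq_inv']
    exact mul_ne_zero (pow_ne_zero _ hℓ2) (inv_ne_zero (hdetMpos x).ne')
  have hSC : ContinuousAt (fun z => (1 / 2 : ℝ) • (Sig x + Sig z)) x :=
    ContinuousAt.const_smul ((continuousAt_const (y := Sig x)).add hSigC) (1 / 2 : ℝ)
  have hSinvC : ContinuousAt (fun z => ((1 / 2 : ℝ) • (Sig x + Sig z))⁻¹) x := by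
    refine ContinuousAt.comp ?_ hSC
    exact continuousAt_matrix_inv _ (hRinv _ (by rw [hSx]; exact hdetSig))
  have hMbarC : ContinuousAt (fun z => Mbar x z) x := by
    have : (fun z => Mbar x z) = fun z => 1 + (1 / 2 : ℝ) •
        (Matrix.vecMulVec (v x) (v x) + Matrix.vecMulVec (v z) (v z)) := funext (hMbar x)
    rw [this]
    exact (continuous_const.add (Continuous.const_smul
      ((continuous_const (y := Matrix.vecMulVec (v x) (v x))).add hVcont) (1 / 2 : ℝ))).continuousAt
  -- the error matrix field
  set Φ : EuclideanSpace ℝ (Fin d) → Matrix (Fin d) (Fin d) ℝ :=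
    fun z => ((1 / 2 : ℝ) • (Sig x + Sig z))⁻¹ - (1 / ℓ ^ 2) • Mbar x z with hΦdef
  have hΦC : ContinuousAt Φ x := hSinvC.sub (ContinuousAt.const_smul hMbarC (1 / ℓ ^ 2 : ℝ))
  have hMbxx : Mbar x x = M x := by
    rw [hMbar, hM]
    congr 1
    rw [← two_smul ℝ (Matrix.vecMulVec (v x) (v x)), smul_smul]
    norm_num
    rfl
  have hΦx : Φ x = 0 := by
    have hinv : (Sig x)⁻¹ = (1 / ℓ ^ 2) • M x := by
      rw [hSig]
      apply Matrix.inv_eq_right_inv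
      rw [Matrix.smul_mul, Matrix.mul_smul, smul_smul, Matrix.nonsing_inv_mul _ (hMu x),
        mul_one_div, div_self hℓ2, one_smul]
    simp only [hΦdef, hSx, hinv, hMbxx, sub_self]
  set F : EuclideanSpace ℝ (Fin d) → Matrix (Fin d) (Fin d) ℝ := fun h => Φ (x + h) with hFdef
  have hF : Filter.Tendsto F (𝓝 0) (𝓝 0) := by
    have h1 : Filter.Tendsto (fun h : EuclideanSpace ℝ (Fin d) => x + h) (𝓝 0) (𝓝 x) := by
      exact ((continuous_const (y := x)).add continuous_id).tendsto' (0 : EuclideanSpace ℝ (Fin d)) x (by simp)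
    have := hΦC.tendsto.comp h1; rw [hΦx] at this; exact this
  set g : EuclideanSpace ℝ (Fin d) → ℝ := fun h => ∑ i, ∑ j, |F h i j| with hgdef
  have hg : Filter.Tendsto g (𝓝 0) (𝓝 0) := by
    have hcont : Continuous fun A : Matrix (Fin d) (Fin d) ℝ => ∑ i, ∑ j, |A i j| := by
      refine continuous_finset_sum _ fun i _ => continuous_finset_sum _ fun j _ => ?_
      exact (continuous_id.matrix_elem i j).abs
    have := (hcont.tendsto 0).comp hF
    simp only [Matrix.zero_apply, abs_zero, Finset.sum_const_zero] at this; exact this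
  -- coordinate bound
  have hcoord : ∀ (h : EuclideanSpace ℝ (Fin d)) (i : Fin d), |h i| ≤ ‖h‖ := by
    intro h i
    rw [EuclideanSpace.norm_eq]
    have h1 : |h i| = Real.sqrt (|h i| ^ 2) := by rw [Real.sqrt_sq_eq_abs, abs_abs]
    rw [h1]
    apply Real.sqrt_le_sqrt
    exact (Finset.single_le_sum (f := fun j => ‖h j‖ ^ 2)
      (fun j _ => by positivity) (Finset.mem_univ i)).trans_eq' (by simp [Real.norm_eq_abs])
  -- rewrite the function as a quadratic form in F
  have hrw : ∀ h : EuclideanSpace ℝ (Fin d),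
      dotProduct (fun i => h i)
          ((((1 / 2 : ℝ) • (Sig x + Sig (x + h)))⁻¹).mulVec fun i => h i)
        - (1 / ℓ ^ 2) * dotProduct (fun i => h i)
            ((Mbar x (x + h)).mulVec fun i => h i)
      = dotProduct (fun i => h i) ((F h).mulVec fun i => h i) := by
    intro h
    simp [hFdef, hΦdef, Matrix.sub_mulVec, dotProduct_sub,
      Matrix.smul_mulVec, dotProduct_smul, smul_eq_mul]
  -- the bound
  have hbound : ∀ h : EuclideanSpace ℝ (Fin d),
      |dotProduct (fun i => h i) ((F h).mulVec fun i => h i)| ≤ g h * ‖h‖ ^ 2 := by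
    intro h
    calc |dotProduct (fun i => h i) ((F h).mulVec fun i => h i)|
        ≤ ∑ i, |h i * (F h).mulVec (fun i => h i) i| := by
          rw [dotProduct]
          exact Finset.abs_sum_le_sum_abs _ _
      _ ≤ ∑ i, ∑ j, |F h i j| * (‖h‖ * ‖h‖) := by
          apply Finset.sum_le_sum
          intro i _
          rw [abs_mul, Matrix.mulVec, dotProduct]
          calc |h i| * |∑ j, F h i j * h j| ≤ |h i| * ∑ j, |F h i j * h j| :=
                mul_le_mul_of_nonneg_left (Finset.abs_sum_le_sum_abs _ _) (abs_nonneg _)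
            _ = ∑ j, |h i| * (|F h i j| * |h j|) := by
                rw [Finset.mul_sum]; congr 1; ext j; rw [abs_mul]
            _ ≤ ∑ j, |F h i j| * (‖h‖ * ‖h‖) := by
                apply Finset.sum_le_sum
                intro j _
                calc |h i| * (|F h i j| * |h j|)
                    = |F h i j| * (|h i| * |h j|) := by ring
                  _ ≤ |F h i j| * (‖h‖ * ‖h‖) :=
                      mul_le_mul_of_nonneg_left
                        (mul_le_mul (hcoord h i) (hcoord h j) (abs_nonneg _) (norm_nonneg _))
                        (abs_nonneg _)
      _ = g h * ‖h‖ ^ 2 := by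
          rw [hgdef]
          simp only [← Finset.sum_mul]
          ring
  rw [Asymptotics.isLittleO_iff]
  intro ε hε
  filter_upwards [hg.eventually (gt_mem_nhds hε)] with h hgh
  rw [hrw h]
  calc ‖dotProduct (fun i => h i) ((F h).mulVec fun i => h i)‖
      = |dotProduct (fun i => h i) ((F h).mulVec fun i => h i)| := Real.norm_eq_abs _
    _ ≤ g h * ‖h‖ ^ 2 := hbound h
    _ ≤ ε * ‖h‖ ^ 2 := by
        apply mul_le_mul_of_nonneg_right hgh.le (by positivity)
    _ = ε * ‖(‖h‖ ^ 2 : ℝ)‖ := by rw [Real.norm_eq_abs, abs_of_nonneg (by positivity)]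
end

section
/- (Bounds on the VSK power function.) Let N ≥ 1 and let K, K^Ψ be symmetric positive definite N×N real matrices, let k, k^Ψ ∈ ℝ^N, and let κ₀ ∈ ℝ. Assume ‖k^Ψ‖₂ ≤ ‖k‖₂, λ_min(K^Ψ) ≥ λ_min(K), and λ_max(K^Ψ) ≤ λ_max(K), where λ_min and λ_max denote the smallest and largest eigenvalues. Then κ₀ − ‖k‖₂² / λ_min(K) ≤ κ₀ − (k^Ψ)ᵀ (K^Ψ)^{-1} k^Ψ ≤ κ₀ − ‖k^Ψ‖₂² / λ_max(K). -/
open Matrix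

section aux
variable {n : Type*} [Fintype n] [DecidableEq n] [Nonempty n]

lemma inv_spectral {A : Matrix n n ℝ} (hA : A.PosDef) :
    A⁻¹ = (hA.1.eigenvectorUnitary : Matrix n n ℝ) * diagonal (fun i => (hA.1.eigenvalues i)⁻¹)
      * (star (hA.1.eigenvectorUnitary : Matrix n n ℝ)) := by
  set U := (hA.1.eigenvectorUnitary : Matrix n n ℝ)
  have hU : U * star U = 1 := Matrix.mem_unitaryGroup_iff.mp hA.1.eigenvectorUnitary.2
  have hU' : star U * U = 1 := Matrix.mem_unitaryGroup_iff'.mp hA.1.eigenvectorUnitary.2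
  apply Matrix.inv_eq_right_inv
  have h := congrArg (· * (U * diagonal (fun i => (hA.1.eigenvalues i)⁻¹) * star U))
    hA.1.spectral_theorem
  simp only [Unitary.conjStarAlgAut_apply, Unitary.coe_star] at h
  rw [h]
  have hd : diagonal (RCLike.ofReal ∘ hA.1.eigenvalues) * diagonal (fun i => (hA.1.eigenvalues i)⁻¹)
      = (1 : Matrix n n ℝ) := by
    have hfun : (fun i => (RCLike.ofReal ∘ hA.1.eigenvalues) i * (hA.1.eigenvalues i)⁻¹)
        = fun _ => (1 : ℝ) :=
      funext fun i => by simp [mul_inv_cancel₀ (hA.eigenvalues_pos i).ne']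
    rw [diagonal_mul_diagonal, hfun, diagonal_one]
  calc U * diagonal (RCLike.ofReal ∘ hA.1.eigenvalues) * star U *
        (U * diagonal (fun i => (hA.1.eigenvalues i)⁻¹) * star U)
      = U * (diagonal (RCLike.ofReal ∘ hA.1.eigenvalues) * ((star U * U)
          * diagonal (fun i => (hA.1.eigenvalues i)⁻¹))) * star U := by
        simp only [Matrix.mul_assoc]
    _ = 1 := by rw [hU', one_mul, hd, mul_one, hU]

lemma rayleigh_inv {A : Matrix n n ℝ} (hA : A.PosDef) (v : n → ℝ) :
    (∑ i, v i ^ 2) / (⨆ i, hA.1.eigenvalues i) ≤ v ⬝ᵥ (A⁻¹ *ᵥ v) ∧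
    v ⬝ᵥ (A⁻¹ *ᵥ v) ≤ (∑ i, v i ^ 2) / (⨅ i, hA.1.eigenvalues i) := by
  set μ := hA.1.eigenvalues with hμ
  set U := (hA.1.eigenvectorUnitary : Matrix n n ℝ) with hUdef
  have hU : U * star U = 1 := Matrix.mem_unitaryGroup_iff.mp hA.1.eigenvectorUnitary.2
  have hstar : star U = Uᵀ := by
    rw [Matrix.star_eq_conjTranspose, Matrix.conjTranspose_eq_transpose_of_trivial]
  set w := Uᵀ *ᵥ v with hw
  have hμpos : ∀ i, 0 < μ i := fun i => hA.eigenvalues_pos i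
  have hq : v ⬝ᵥ (A⁻¹ *ᵥ v) = ∑ i, (μ i)⁻¹ * w i ^ 2 := by
    rw [inv_spectral hA, hstar, ← hUdef, ← mulVec_mulVec, ← mulVec_mulVec,
      dotProduct_mulVec v U, ← mulVec_transpose, ← hw]
    simp only [dotProduct, mulVec_diagonal]
    exact Finset.sum_congr rfl fun i _ => by ring
  have hnorm : ∑ i, v i ^ 2 = ∑ i, w i ^ 2 := by
    have h1 : ∑ i, v i ^ 2 = v ⬝ᵥ ((U * Uᵀ) *ᵥ v) := by
      rw [← hstar, hU, one_mulVec]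
      simp [dotProduct, pow_two]
    rw [h1, ← mulVec_mulVec, dotProduct_mulVec v U, ← mulVec_transpose, ← hw]
    simp [dotProduct, pow_two]
  -- sup and inf facts
  have hbdd : BddAbove (Set.range μ) := Set.Finite.bddAbove (Set.finite_range μ)
  have hbddb : BddBelow (Set.range μ) := Set.Finite.bddBelow (Set.finite_range μ)
  obtain ⟨j, hj⟩ : ∃ j, μ j = ⨅ i, μ i := exists_eq_ciInf_of_finite
  obtain ⟨j', hj'⟩ : ∃ j', μ j' = ⨆ i, μ i := exists_eq_ciSup_of_finite
  have hminpos : 0 < ⨅ i, μ i := hj ▸ hμpos j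
  have hmaxpos : 0 < ⨆ i, μ i := hj' ▸ hμpos j'
  constructor
  · rw [hq, hnorm, div_eq_mul_inv, Finset.sum_mul]
    refine Finset.sum_le_sum fun i _ => ?_
    rw [mul_comm]
    refine mul_le_mul_of_nonneg_right ?_ (sq_nonneg _)
    exact inv_anti₀ (hμpos i) (le_ciSup hbdd i)
  · rw [hq, hnorm, div_eq_mul_inv, Finset.sum_mul]
    refine Finset.sum_le_sum fun i _ => ?_
    rw [mul_comm ((w i)^2)]
    refine mul_le_mul_of_nonneg_right ?_ (sq_nonneg _)
    exact inv_anti₀ hminpos (ciInf_le hbddb i)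
end aux


/-- Bounds on the VSK power function: if `K, K^Ψ` are symmetric
positive definite `N×N` matrices with `‖k^Ψ‖₂ ≤ ‖k‖₂`, `λ_min(K^Ψ) ≥ λ_min(K)` and
`λ_max(K^Ψ) ≤ λ_max(K)`, then
`κ₀ − ‖k‖₂²/λ_min(K) ≤ κ₀ − (k^Ψ)ᵀ(K^Ψ)⁻¹k^Ψ ≤ κ₀ − ‖k^Ψ‖₂²/λ_max(K)`. -/
theorem stmt_11 (N : ℕ) (hN : 1 ≤ N)
    (K KΨ : Matrix (Fin N) (Fin N) ℝ) (hK : K.PosDef) (hKΨ : KΨ.PosDef)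
    (k kΨ : Fin N → ℝ) (κ₀ : ℝ)
    (hk : Real.sqrt (∑ i, kΨ i ^ 2) ≤ Real.sqrt (∑ i, k i ^ 2))
    (hmin : (⨅ i, hK.1.eigenvalues i) ≤ ⨅ i, hKΨ.1.eigenvalues i)
    (hmax : (⨆ i, hKΨ.1.eigenvalues i) ≤ ⨆ i, hK.1.eigenvalues i) :
    κ₀ - (∑ i, k i ^ 2) / (⨅ i, hK.1.eigenvalues i)
        ≤ κ₀ - dotProduct kΨ ((KΨ)⁻¹.mulVec kΨ) ∧
      κ₀ - dotProduct kΨ ((KΨ)⁻¹.mulVec kΨ)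
        ≤ κ₀ - (∑ i, kΨ i ^ 2) / (⨆ i, hK.1.eigenvalues i) := by
  haveI : NeZero N := ⟨by omega⟩
  have hk2 : (∑ i, kΨ i ^ 2) ≤ ∑ i, k i ^ 2 := by
    have h0 : (0 : ℝ) ≤ ∑ i, kΨ i ^ 2 := by positivity
    have h1 : (0 : ℝ) ≤ ∑ i, k i ^ 2 := by positivity
    nlinarith [Real.sq_sqrt h0, Real.sq_sqrt h1, Real.sqrt_nonneg (∑ i, kΨ i ^ 2),
      Real.sqrt_nonneg (∑ i, k i ^ 2)]
  obtain ⟨hlow, hhigh⟩ := rayleigh_inv hKΨ kΨ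
  obtain ⟨j, hj⟩ : ∃ j, hK.1.eigenvalues j = ⨅ i, hK.1.eigenvalues i := exists_eq_ciInf_of_finite
  obtain ⟨j', hj'⟩ : ∃ j', hK.1.eigenvalues j' = ⨆ i, hK.1.eigenvalues i := exists_eq_ciSup_of_finite
  have hminKpos : 0 < ⨅ i, hK.1.eigenvalues i := hj ▸ hK.eigenvalues_pos j
  have hmaxKpos : 0 < ⨆ i, hK.1.eigenvalues i := hj' ▸ hK.eigenvalues_pos j'
  have hminΨpos : 0 < ⨅ i, hKΨ.1.eigenvalues i := lt_of_lt_of_le hminKpos hmin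
  have hkΨ0 : (0 : ℝ) ≤ ∑ i, kΨ i ^ 2 := by positivity
  constructor
  · apply sub_le_sub_left
    calc dotProduct kΨ ((KΨ)⁻¹.mulVec kΨ)
        ≤ (∑ i, kΨ i ^ 2) / (⨅ i, hKΨ.1.eigenvalues i) := hhigh
      _ ≤ (∑ i, kΨ i ^ 2) / (⨅ i, hK.1.eigenvalues i) := by gcongr
      _ ≤ (∑ i, k i ^ 2) / (⨅ i, hK.1.eigenvalues i) := by gcongr
  · apply sub_le_sub_left
    calc (∑ i, kΨ i ^ 2) / (⨆ i, hK.1.eigenvalues i)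
        ≤ (∑ i, kΨ i ^ 2) / (⨆ i, hKΨ.1.eigenvalues i) := by
          gcongr
          refine lt_of_lt_of_le hminΨpos ?_
          exact le_trans (ciInf_le (Set.Finite.bddBelow (Set.finite_range _)) (Classical.arbitrary _))
            (le_ciSup (Set.Finite.bddAbove (Set.finite_range _)) _)
      _ ≤ dotProduct kΨ ((KΨ)⁻¹.mulVec kΨ) := hlow
end
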